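/- Let P, P̂, P̄ be transition kernels on S×A with, for every (x,a), the support of P(·|x,a) contained in the supports of both P̂(·|x,a) and P̄(·|x,a); let r : S×A → ℝ, γ ∈ [0,1), and φ₁,…,φ_d : S → ℝ. Assume: (i) for every (x,a) and every i, ∑_y P̄(y|x,a)·φᵢ(y) = ∑_y P(y|x,a)·φᵢ(y); (ii) for every (x,a), KL(P(·|x,a)‖P̄(·|x,a)) ≤ KL(P(·|x,a)‖P̂(·|x,a)). Set ε := max_{(x,a)} √(KL(P(·|x,a)‖P̂(·|x,a))) and c₁ := γ√2/(1−γ), and assume c₁·ε < 1. Let π* be an optimal deterministic policy for (r,P) and π̄* an optimal deterministic policy for (r,P̄). Then for every w ∈ ℝ^d, ‖V^{π*}(r,P) − V^{π̄*}(r,P)‖∞ ≤ (2c₁ε/(1 − c₁ε)) · ‖V^{π*}(r,P) − ∑_{i=1}^d wᵢφᵢ‖∞. -/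

import Mathlib

open Finset Matrix

/-- Supremum norm of a vector indexed by a finite type. -/
noncomputable def supNorm {S : Type*} [Fintype S] (v : S → ℝ) : ℝ := ⨆ x, |v x|

/-- KL divergence of finitely supported probability vectors,
with the convention `0 * log 0 = 0` (automatic since `Real.log 0 = 0`). -/
noncomputable def KLfin {S : Type*} [Fintype S] (p q : S → ℝ) : ℝ :=
  ∑ y, p y * Real.log (p y / q y)

/-- The row-stochastic matrix `P^μ` induced by a deterministic policy `μ`. -/
noncomputable def polMat {S A : Type*} (P : S → A → S → ℝ) (μ : S → A) : Matrix S S ℝ :=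
  Matrix.of fun x y => P x (μ x) y

/-- The value function `V^μ(r,P) = (I - γ P^μ)⁻¹ r^μ` of a deterministic policy `μ`. -/
noncomputable def polVal {S A : Type*} [Fintype S] [DecidableEq S]
    (γ : ℝ) (r : S → A → ℝ) (P : S → A → S → ℝ) (μ : S → A) : S → ℝ :=
  ((1 : Matrix S S ℝ) - γ • polMat P μ)⁻¹.mulVec (fun x => r x (μ x))


section PinskerCore
open Set


noncomputable def Gfun : ℝ → ℝ := fun t => t * Real.log t - t + 1 - (3/2) * (t-1)^2 / (t+2)
noncomputable def G1fun : ℝ → ℝ := fun t => Real.log t - (3/2) * ((t-1)*(t+5)) / (t+2)^2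
noncomputable def G2fun : ℝ → ℝ := fun t => 1/t - 27/(t+2)^3

lemma hasDerivG {t : ℝ} (ht : 0 < t) : HasDerivAt Gfun (G1fun t) t := by
  have h2 : t + 2 ≠ 0 := by positivity
  have h1 : HasDerivAt (fun t : ℝ => t * Real.log t - t + 1) (Real.log t) t := by
    have := (hasDerivAt_id t).mul (Real.hasDerivAt_log ht.ne')
    have h := (this.sub (hasDerivAt_id t)).add_const 1
    refine h.congr_deriv ?_
    simp [ht.ne']
  have h3 : HasDerivAt (fun t : ℝ => (3/2) * (t-1)^2 / (t+2))
      ((3/2) * ((t-1)*(t+5)) / (t+2)^2) t := by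
    have hn : HasDerivAt (fun t : ℝ => (3/2) * (t-1)^2) ((3/2) * (2*(t-1))) t := by
      have := ((hasDerivAt_id t).sub_const 1).pow 2
      simpa using (this.const_mul (3/2 : ℝ))
    have hd : HasDerivAt (fun t : ℝ => t + 2) 1 t := (hasDerivAt_id t).add_const 2
    have := hn.div hd h2
    refine this.congr_deriv ?_
    congr 1
    ring
  have := h1.sub h3
  exact this

lemma hasDerivG1 {t : ℝ} (ht : 0 < t) : HasDerivAt G1fun (G2fun t) t := by
  have h2 : t + 2 ≠ 0 := by positivity
  have h2' : (t + 2)^2 ≠ 0 := pow_ne_zero _ h2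
  have hn : HasDerivAt (fun t : ℝ => (3/2) * ((t-1)*(t+5))) ((3/2) * ((t+5) + (t-1))) t := by
    have := (((hasDerivAt_id t).sub_const 1).mul ((hasDerivAt_id t).add_const 5)).const_mul
      (3/2 : ℝ)
    refine this.congr_deriv ?_
    simp only [id]; ring
  have hd : HasDerivAt (fun t : ℝ => (t+2)^2) (2*(t+2)) t := by
    have := ((hasDerivAt_id t).add_const 2).pow 2
    refine this.congr_deriv ?_
    simp [id]
  have h3 := (Real.hasDerivAt_log ht.ne').sub (hn.div hd h2')
  refine h3.congr_deriv ?_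
  symm
  unfold G2fun
  rw [div_sub_div _ _ ht.ne' (by positivity : ((t+2)^3 : ℝ) ≠ 0)]
  field_simp
  ring

lemma G2nonneg {t : ℝ} (ht : 0 < t) : 0 ≤ G2fun t := by
  unfold G2fun
  rw [sub_nonneg, div_le_div_iff₀ (by positivity) ht]
  nlinarith [sq_nonneg (t-1), ht.le]

lemma G1mono : MonotoneOn G1fun (Ioi (0:ℝ)) := by
  apply monotoneOn_of_deriv_nonneg (convex_Ioi 0)
  · exact fun x hx => (hasDerivG1 hx).continuousAt.continuousWithinAt
  · rw [interior_Ioi]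
    exact fun x hx => (hasDerivG1 hx).differentiableAt.differentiableWithinAt
  · rw [interior_Ioi]
    intro x hx
    rw [(hasDerivG1 hx).deriv]
    exact G2nonneg hx

lemma G1one : G1fun 1 = 0 := by
  unfold G1fun; simp

lemma Gnonneg {t : ℝ} (ht : 0 < t) : 0 ≤ Gfun t := by
  have hG1 : ∀ x ∈ Ici (1:ℝ), 1 ≤ x → 0 ≤ G1fun x := fun x _ hx => by
    rw [← G1one]
    exact G1mono (mem_Ioi.2 one_pos) (mem_Ioi.2 (lt_of_lt_of_le one_pos hx)) hx
  have hGone : Gfun 1 = 0 := by unfold Gfun; norm_num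
  rcases le_total 1 t with h | h
  · have : MonotoneOn Gfun (Ici (1:ℝ)) := by
      apply monotoneOn_of_deriv_nonneg (convex_Ici 1)
      · exact fun x hx => (hasDerivG (lt_of_lt_of_le one_pos hx)).continuousAt.continuousWithinAt
      · rw [interior_Ici]
        exact fun x hx => (hasDerivG (lt_trans one_pos hx)).differentiableAt.differentiableWithinAt
      · rw [interior_Ici]
        intro x hx
        rw [(hasDerivG (lt_trans one_pos hx)).deriv]
        exact hG1 x (Set.mem_Ici.2 (le_of_lt hx)) (le_of_lt hx)
    rw [← hGone]
    exact this (self_mem_Ici) h h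
  · have hanti : AntitoneOn Gfun (Ioc (0:ℝ) 1) := by
      apply antitoneOn_of_deriv_nonpos (convex_Ioc 0 1)
      · exact fun x hx => (hasDerivG hx.1).continuousAt.continuousWithinAt
      · rw [interior_Ioc]
        exact fun x hx => (hasDerivG hx.1).differentiableAt.differentiableWithinAt
      · rw [interior_Ioc]
        intro x hx
        rw [(hasDerivG hx.1).deriv, ← G1one]
        exact G1mono (mem_Ioi.2 hx.1) (mem_Ioi.2 one_pos) hx.2.le
    rw [← hGone]
    exact hanti ⟨ht, h⟩ ⟨one_pos, le_refl 1⟩ h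

end PinskerCore


lemma ptIneq {p q : ℝ} (hp : 0 ≤ p) (hq : 0 ≤ q) (hsupp : q = 0 → p = 0) :
    (3/2) * (p - q)^2 / (p + 2*q) ≤ p * Real.log (p / q) - p + q := by
  rcases eq_or_lt_of_le hq with hq0 | hq0
  · have hp0 : p = 0 := hsupp hq0.symm
    simp [hp0, ← hq0]
  rcases eq_or_lt_of_le hp with hp0 | hp0
  · rw [← hp0]
    have h1 : (3:ℝ)/2 * (0 - q)^2 / (0 + 2*q) = (3/4) * q := by
      field_simp
      ring
    rw [h1]
    nlinarith
  · have ht : 0 < p / q := div_pos hp0 hq0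
    have hG := Gnonneg ht
    unfold Gfun at hG
    have hq' : q ≠ 0 := hq0.ne'
    have key : q * ((p/q) * Real.log (p/q) - (p/q) + 1 - (3/2) * ((p/q)-1)^2 / ((p/q)+2))
        = (p * Real.log (p / q) - p + q) - (3/2) * (p - q)^2 / (p + 2*q) := by
      have hpq : p + 2*q ≠ 0 := by positivity
      field_simp
    nlinarith [mul_nonneg hq0.le hG]


lemma pinsker_fin {S : Type*} [Fintype S] (p q : S → ℝ)
    (hp0 : ∀ y, 0 ≤ p y) (hq0 : ∀ y, 0 ≤ q y)
    (hp1 : ∑ y, p y = 1) (hq1 : ∑ y, q y = 1)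
    (hsupp : ∀ y, q y = 0 → p y = 0) :
    ∑ y, |p y - q y| ≤ Real.sqrt (2 * KLfin p q) := by
  classical
  set s : Finset S := Finset.univ.filter (fun y => 0 < p y + 2 * q y) with hs
  have hzero : ∀ y, ¬ (0 < p y + 2 * q y) → p y = 0 ∧ q y = 0 := by
    intro y hy
    push_neg at hy
    constructor <;> nlinarith [hp0 y, hq0 y]
  have hL : ∑ y, |p y - q y| = ∑ y ∈ s, |p y - q y| := by
    rw [hs]
    rw [Finset.sum_filter_of_ne]
    intro y _ hne
    by_contra hc
    obtain ⟨h1, h2⟩ := hzero y hc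
    simp [h1, h2] at hne
  have hg : ∑ y ∈ s, (p y + 2 * q y) = 3 := by
    rw [hs, Finset.sum_filter_of_ne, Finset.sum_add_distrib, ← Finset.mul_sum, hp1, hq1]
    · norm_num
    · intro y _ hne
      by_contra hc
      obtain ⟨h1, h2⟩ := hzero y hc
      simp [h1, h2] at hne
  have hsed := Finset.sq_sum_div_le_sum_sq_div s (fun y => |p y - q y|)
    (g := fun y => p y + 2 * q y) (fun y hy => (Finset.mem_filter.1 hy).2)
  rw [hg] at hsed
  have hterm : ∑ y ∈ s, |p y - q y| ^ 2 / (p y + 2 * q y)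
      ≤ (2/3) * KLfin p q := by
    have h1 : ∀ y, |p y - q y| ^ 2 / (p y + 2 * q y)
        ≤ (2/3) * (p y * Real.log (p y / q y) - p y + q y) := by
      intro y
      rw [sq_abs]
      have h := ptIneq (hp0 y) (hq0 y) (hsupp y)
      rw [mul_div_assoc] at h
      linarith
    calc ∑ y ∈ s, |p y - q y| ^ 2 / (p y + 2 * q y)
        ≤ ∑ y, |p y - q y| ^ 2 / (p y + 2 * q y) := by
          apply Finset.sum_le_sum_of_subset_of_nonneg (Finset.subset_univ s)
          intro y _ _
          have h1 := hp0 y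
          have h2 := hq0 y
          positivity
      _ ≤ ∑ y, (2/3) * (p y * Real.log (p y / q y) - p y + q y) :=
          Finset.sum_le_sum fun y _ => h1 y
      _ = (2/3) * KLfin p q := by
          rw [← Finset.mul_sum]
          congr 1
          unfold KLfin
          rw [Finset.sum_add_distrib, Finset.sum_sub_distrib, hp1, hq1]
          ring
  have hLnn : 0 ≤ ∑ y, |p y - q y| := Finset.sum_nonneg fun y _ => abs_nonneg _
  have hsq : (∑ y, |p y - q y|) ^ 2 ≤ 2 * KLfin p q := by
    rw [hL]
    linarith
  calc ∑ y, |p y - q y| = Real.sqrt ((∑ y, |p y - q y|) ^ 2) := (Real.sqrt_sq hLnn).symm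
    _ ≤ Real.sqrt (2 * KLfin p q) := Real.sqrt_le_sqrt hsq


section helpers
variable {S : Type*} [Fintype S] [Nonempty S]

lemma le_supNorm (v : S → ℝ) (x : S) : |v x| ≤ supNorm v := by
  unfold supNorm
  exact le_ciSup (Set.Finite.bddAbove (Set.finite_range fun x => |v x|)) x

lemma supNorm_le {v : S → ℝ} {B : ℝ} (h : ∀ x, |v x| ≤ B) : supNorm v ≤ B :=
  ciSup_le h

lemma supNorm_nonneg (v : S → ℝ) : 0 ≤ supNorm v :=
  le_trans (abs_nonneg _) (le_supNorm v (Classical.arbitrary S))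

end helpers

lemma bellman {S A : Type*} [Fintype S] [Nonempty S] [DecidableEq S]
    (γ : ℝ) (hγ0 : 0 ≤ γ) (hγ1 : γ < 1)
    (r : S → A → ℝ) (P : S → A → S → ℝ)
    (hP0 : ∀ x a y, 0 ≤ P x a y) (hP1 : ∀ x a, ∑ y, P x a y = 1) (μ : S → A) :
    ∀ x, polVal γ r P μ x = r x (μ x) + γ * ∑ y, P x (μ x) y * polVal γ r P μ y := by
  classical
  set M : Matrix S S ℝ := polMat P μ with hM
  have hM0 : ∀ x y, (0:ℝ) ≤ M x y := fun x y => hP0 x (μ x) y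
  have hM1 : ∀ x, ∑ y, M x y = 1 := fun x => hP1 x (μ x)
  set Amat : Matrix S S ℝ := (1 : Matrix S S ℝ) - γ • M with hA
  have hAapp : ∀ (w : S → ℝ) (x : S),
      Amat.mulVec w x = w x - γ * ∑ y, M x y * w y := by
    intro w x
    have h1 : Amat.mulVec w = w - γ • (M.mulVec w) := by
      rw [hA, Matrix.sub_mulVec, Matrix.one_mulVec, Matrix.smul_mulVec]
    rw [h1]
    simp [Matrix.mulVec, dotProduct]
  have hdet : Amat.det ≠ 0 := by
    intro hd
    obtain ⟨v, hv0, hv⟩ := (Matrix.exists_mulVec_eq_zero_iff).mpr hd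
    have hvx : ∀ x, v x = γ * ∑ y, M x y * v y := by
      intro x
      have h1 := congrFun hv x
      rw [hAapp v x] at h1
      have h2 : (0 : S → ℝ) x = 0 := rfl
      rw [h2] at h1
      linarith
    obtain ⟨x₀, hx₀⟩ := Finset.exists_max_image Finset.univ (fun x => |v x|)
      ⟨Classical.arbitrary S, Finset.mem_univ _⟩
    have hpos : 0 < |v x₀| := by
      rcases Function.ne_iff.mp hv0 with ⟨x, hx⟩
      exact lt_of_lt_of_le (abs_pos.2 hx) (hx₀.2 x (Finset.mem_univ x))
    have hle : |v x₀| ≤ γ * |v x₀| := by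
      calc |v x₀| = γ * |∑ y, M x₀ y * v y| := by rw [hvx x₀, abs_mul, abs_of_nonneg hγ0]
        _ ≤ γ * ∑ y, M x₀ y * |v x₀| := by
            apply mul_le_mul_of_nonneg_left _ hγ0
            calc |∑ y, M x₀ y * v y| ≤ ∑ y, |M x₀ y * v y| := Finset.abs_sum_le_sum_abs _ _
              _ ≤ ∑ y, M x₀ y * |v x₀| := by
                  apply Finset.sum_le_sum
                  intro y _
                  rw [abs_mul, abs_of_nonneg (hM0 x₀ y)]
                  exact mul_le_mul_of_nonneg_left (hx₀.2 y (Finset.mem_univ y)) (hM0 x₀ y)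
        _ = γ * |v x₀| := by rw [← Finset.sum_mul, hM1 x₀, one_mul]
    nlinarith
  have hunit : IsUnit Amat.det := isUnit_iff_ne_zero.2 hdet
  have hAV : Amat.mulVec (polVal γ r P μ) = fun x => r x (μ x) := by
    unfold polVal
    rw [← hM, ← hA, Matrix.mulVec_mulVec, Matrix.mul_nonsing_inv _ hunit, Matrix.one_mulVec]
  intro x
  have h1 := congrFun hAV x
  rw [hAapp _ x] at h1
  have h2 : ∑ y, M x y * polVal γ r P μ y = ∑ y, P x (μ x) y * polVal γ r P μ y := by
    apply Finset.sum_congr rfl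
    intro y _
    rw [hM]
    rfl
  rw [h2] at h1
  linarith


lemma simulation {S A : Type*} [Fintype S] [Nonempty S] [DecidableEq S]
    (γ : ℝ) (hγ0 : 0 ≤ γ) (hγ1 : γ < 1)
    (r : S → A → ℝ) (P Pbar : S → A → S → ℝ)
    (hP0 : ∀ x a y, 0 ≤ P x a y) (hP1 : ∀ x a, ∑ y, P x a y = 1)
    (hPbar0 : ∀ x a y, 0 ≤ Pbar x a y) (hPbar1 : ∀ x a, ∑ y, Pbar x a y = 1)
    (g : S → ℝ) (ε : ℝ) (hεnn : 0 ≤ ε)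
    (hg : ∀ x a, ∑ y, (P x a y - Pbar x a y) * g y = 0)
    (hTV : ∀ x a, ∑ y, |P x a y - Pbar x a y| ≤ Real.sqrt 2 * ε)
    (μ : S → A) :
    supNorm (fun x => polVal γ r P μ x - polVal γ r Pbar μ x) ≤
      (γ * Real.sqrt 2 / (1 - γ)) * ε *
        supNorm (fun x => polVal γ r P μ x - g x) := by
  set V : S → ℝ := polVal γ r P μ with hV
  set W : S → ℝ := polVal γ r Pbar μ with hW
  set δ : ℝ := supNorm (fun x => V x - g x) with hδ
  set D : ℝ := supNorm (fun x => V x - W x) with hD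
  have hδnn : 0 ≤ δ := supNorm_nonneg _
  have hDnn : 0 ≤ D := supNorm_nonneg _
  have hstep : ∀ x, |V x - W x| ≤ γ * (Real.sqrt 2 * ε * δ) + γ * D := by
    intro x
    have hBV := bellman γ hγ0 hγ1 r P hP0 hP1 μ x
    have hBW := bellman γ hγ0 hγ1 r Pbar hPbar0 hPbar1 μ x
    rw [← hV] at hBV
    rw [← hW] at hBW
    set a := μ x
    have key : V x - W x =
        γ * ((∑ y, (P x a y - Pbar x a y) * (V y - g y)) +
          ∑ y, Pbar x a y * (V y - W y)) := by
      have h0 := hg x a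
      rw [hBV, hBW]
      simp only [sub_mul, mul_sub, Finset.sum_sub_distrib] at h0 ⊢
      ring_nf
      ring_nf at h0
      have h0γ : γ * ∑ y, P x a y * g y = γ * ∑ y, Pbar x a y * g y := by
        rw [sub_eq_zero] at h0
        rw [h0]
      linarith
    rw [key, abs_mul, abs_of_nonneg hγ0]
    refine le_trans (mul_le_mul_of_nonneg_left (abs_add_le _ _) hγ0) ?_
    rw [mul_add]
    apply add_le_add
    · apply mul_le_mul_of_nonneg_left _ hγ0
      calc |∑ y, (P x a y - Pbar x a y) * (V y - g y)|
          ≤ ∑ y, |(P x a y - Pbar x a y) * (V y - g y)| := Finset.abs_sum_le_sum_abs _ _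
        _ ≤ ∑ y, |P x a y - Pbar x a y| * δ := by
            apply Finset.sum_le_sum
            intro y _
            rw [abs_mul]
            exact mul_le_mul_of_nonneg_left (le_supNorm (fun x => V x - g x) y) (abs_nonneg _)
        _ = (∑ y, |P x a y - Pbar x a y|) * δ := by rw [Finset.sum_mul]
        _ ≤ Real.sqrt 2 * ε * δ := mul_le_mul_of_nonneg_right (hTV x a) hδnn
    · apply mul_le_mul_of_nonneg_left _ hγ0
      calc |∑ y, Pbar x a y * (V y - W y)|
          ≤ ∑ y, |Pbar x a y * (V y - W y)| := Finset.abs_sum_le_sum_abs _ _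
        _ ≤ ∑ y, Pbar x a y * D := by
            apply Finset.sum_le_sum
            intro y _
            rw [abs_mul, abs_of_nonneg (hPbar0 x a y)]
            exact mul_le_mul_of_nonneg_left (le_supNorm (fun x => V x - W x) y) (hPbar0 x a y)
        _ = D := by rw [← Finset.sum_mul, hPbar1 x a, one_mul]
  have hDle : D ≤ γ * (Real.sqrt 2 * ε * δ) + γ * D := supNorm_le hstep
  have h1γ : 0 < 1 - γ := by linarith
  rw [div_mul_eq_mul_div, div_mul_eq_mul_div, le_div_iff₀ h1γ]
  nlinarith [Real.sqrt_nonneg 2]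


theorem stmt5 {S A : Type*} [Fintype S] [Nonempty S] [DecidableEq S] [Fintype A] [Nonempty A]
    (P Phat Pbar : S → A → S → ℝ)
    (hP0 : ∀ x a y, 0 ≤ P x a y) (hP1 : ∀ x a, ∑ y, P x a y = 1)
    (hPhat0 : ∀ x a y, 0 ≤ Phat x a y) (hPhat1 : ∀ x a, ∑ y, Phat x a y = 1)
    (hPbar0 : ∀ x a y, 0 ≤ Pbar x a y) (hPbar1 : ∀ x a, ∑ y, Pbar x a y = 1)
    (hsupphat : ∀ x a y, Phat x a y = 0 → P x a y = 0)
    (hsuppbar : ∀ x a y, Pbar x a y = 0 → P x a y = 0)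
    (r : S → A → ℝ) (γ : ℝ) (hγ0 : 0 ≤ γ) (hγ1 : γ < 1)
    (d : ℕ) (φ : Fin d → S → ℝ)
    (hmatch : ∀ x a, ∀ i : Fin d, ∑ y, Pbar x a y * φ i y = ∑ y, P x a y * φ i y)
    (hKLle : ∀ x a, KLfin (P x a) (Pbar x a) ≤ KLfin (P x a) (Phat x a))
    (ε c₁ : ℝ)
    (hε : ε = ⨆ x, ⨆ a, Real.sqrt (KLfin (P x a) (Phat x a)))
    (hc₁ : c₁ = γ * Real.sqrt 2 / (1 - γ))
    (hsmall : c₁ * ε < 1)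
    (πstar πbar : S → A)
    (hopt : ∀ μ : S → A, ∀ x, polVal γ r P μ x ≤ polVal γ r P πstar x)
    (hoptbar : ∀ μ : S → A, ∀ x, polVal γ r Pbar μ x ≤ polVal γ r Pbar πbar x) :
    ∀ w : Fin d → ℝ,
      supNorm (fun x => polVal γ r P πstar x - polVal γ r P πbar x) ≤
        (2 * c₁ * ε / (1 - c₁ * ε)) *
          supNorm (fun x => polVal γ r P πstar x - ∑ i, w i * φ i x) := by
  intro w
  -- ε bounds
  have hεge : ∀ x a, Real.sqrt (KLfin (P x a) (Phat x a)) ≤ ε := by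
    intro x a
    rw [hε]
    calc Real.sqrt (KLfin (P x a) (Phat x a))
        ≤ ⨆ a, Real.sqrt (KLfin (P x a) (Phat x a)) :=
          le_ciSup (f := fun a => Real.sqrt (KLfin (P x a) (Phat x a)))
            (Set.Finite.bddAbove (Set.finite_range _)) a
      _ ≤ ⨆ x, ⨆ a, Real.sqrt (KLfin (P x a) (Phat x a)) :=
          le_ciSup (f := fun x => ⨆ a, Real.sqrt (KLfin (P x a) (Phat x a)))
            (Set.Finite.bddAbove (Set.finite_range _)) x
  have hεnn : 0 ≤ ε :=
    le_trans (Real.sqrt_nonneg _) (hεge (Classical.arbitrary S) (Classical.arbitrary A))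
  have hc₁nn : 0 ≤ c₁ := by
    rw [hc₁]
    have : (0:ℝ) < 1 - γ := by linarith
    positivity
  -- total variation bound
  have hTV : ∀ x a, ∑ y, |P x a y - Pbar x a y| ≤ Real.sqrt 2 * ε := by
    intro x a
    calc ∑ y, |P x a y - Pbar x a y|
        ≤ Real.sqrt (2 * KLfin (P x a) (Pbar x a)) :=
          pinsker_fin _ _ (hP0 x a) (hPbar0 x a) (hP1 x a) (hPbar1 x a) (hsuppbar x a)
      _ ≤ Real.sqrt (2 * KLfin (P x a) (Phat x a)) := by
          apply Real.sqrt_le_sqrt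
          nlinarith [hKLle x a]
      _ = Real.sqrt 2 * Real.sqrt (KLfin (P x a) (Phat x a)) := Real.sqrt_mul (by norm_num) _
      _ ≤ Real.sqrt 2 * ε :=
          mul_le_mul_of_nonneg_left (hεge x a) (Real.sqrt_nonneg 2)
  -- feature matching
  set g : S → ℝ := fun x => ∑ i, w i * φ i x with hgdef
  have lhs1 : ∀ (Q : S → ℝ), ∑ y, ∑ i, Q y * (w i * φ i y) = ∑ i, w i * ∑ y, Q y * φ i y := by
    intro Q
    rw [Finset.sum_comm]
    apply Finset.sum_congr rfl
    intro i _
    rw [Finset.mul_sum]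
    apply Finset.sum_congr rfl
    intro y _
    ring
  have hg : ∀ x a, ∑ y, (P x a y - Pbar x a y) * g y = 0 := by
    intro x a
    have : ∑ y, (P x a y - Pbar x a y) * g y
        = ∑ i, w i * (∑ y, P x a y * φ i y - ∑ y, Pbar x a y * φ i y) := by
      simp only [hgdef, Finset.mul_sum, Finset.sum_sub_distrib, sub_mul, mul_sub]
      rw [lhs1 (P x a), lhs1 (Pbar x a)]
      congr 1
      all_goals
        apply Finset.sum_congr rfl
        intro i _
        rw [Finset.mul_sum]
    rw [this]
    apply Finset.sum_eq_zero
    intro i _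
    rw [hmatch x a i]
    simp
  -- apply simulation lemma to both policies
  have hc₁' : γ * Real.sqrt 2 / (1 - γ) = c₁ := hc₁.symm
  have hsim1 := simulation γ hγ0 hγ1 r P Pbar hP0 hP1 hPbar0 hPbar1 g ε hεnn hg hTV πstar
  have hsim2 := simulation γ hγ0 hγ1 r P Pbar hP0 hP1 hPbar0 hPbar1 g ε hεnn hg hTV πbar
  rw [hc₁'] at hsim1 hsim2
  set V1 : S → ℝ := polVal γ r P πstar
  set V2 : S → ℝ := polVal γ r P πbar
  set W1 : S → ℝ := polVal γ r Pbar πstar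
  set W2 : S → ℝ := polVal γ r Pbar πbar
  set δ : ℝ := supNorm (fun x => V1 x - g x) with hδ
  set DD : ℝ := supNorm (fun x => V1 x - V2 x) with hDD
  have hδnn : 0 ≤ δ := supNorm_nonneg _
  have hδ2 : supNorm (fun x => V2 x - g x) ≤ DD + δ := by
    apply supNorm_le
    intro x
    calc |V2 x - g x| ≤ |V2 x - V1 x| + |V1 x - g x| := by
          have : V2 x - g x = (V2 x - V1 x) + (V1 x - g x) := by ring
          rw [this]; exact abs_add_le _ _
      _ ≤ DD + δ := by
          apply add_le_add _ (le_supNorm (fun x => V1 x - g x) x)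
          rw [abs_sub_comm]
          exact le_supNorm (fun x => V1 x - V2 x) x
  have hDDle : DD ≤ c₁ * ε * δ + c₁ * ε * (DD + δ) := by
    apply supNorm_le
    intro x
    have hpos : 0 ≤ V1 x - V2 x := sub_nonneg.2 (hopt πbar x)
    rw [abs_of_nonneg hpos]
    have hmid : W1 x - W2 x ≤ 0 := sub_nonpos.2 (hoptbar πstar x)
    have h1 : V1 x - W1 x ≤ c₁ * ε * δ :=
      le_trans (le_trans (le_abs_self _) (le_supNorm (fun x => V1 x - W1 x) x)) hsim1
    have h2 : W2 x - V2 x ≤ c₁ * ε * (DD + δ) := by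
      have := le_trans (le_trans (neg_le_abs _) (le_supNorm (fun x => V2 x - W2 x) x)) hsim2
      have h3 : c₁ * ε * supNorm (fun x => V2 x - g x) ≤ c₁ * ε * (DD + δ) :=
        mul_le_mul_of_nonneg_left hδ2 (by positivity)
      simp only [neg_sub] at this
      linarith
    linarith
  have hden : 0 < 1 - c₁ * ε := by linarith
  rw [div_mul_eq_mul_div, le_div_iff₀ hden]
  have hDDnn : 0 ≤ DD := supNorm_nonneg _
  nlinarith
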